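/- arXiv:0902.4611 — 3 statements merged into one kernel-verified Lean document; each statement's English description precedes it below -/
import Mathlib

section
/- The scalar curvature function s(y_1,y_2,y_3) of the AMWP metric for the STU-model cubic, given explicitly by s = (2 / (3(y_3(y_2+y_3) + y_1(y_2+2y_3))³)) * (16y_1⁶ - 9y_3³(y_2+y_3)³ + 24y_1⁵(y_2+2y_3) - 27y_1y_3²(y_2+y_3)²(y_2+2y_3) + 12y_1⁴(y_2² + 6y_2y_3 + 6y_3²) - 3y_1³(3y_2³ + 10y_2²y_3 + 12y_2y_3² + 8y_3³) - 3y_1²y_3(9y_2³ + 41y_2²y_3 + 64y_2y_3² + 32y_3³)), tends to +∞ as s → ∞ along the curve (y_1, y_2, y_3) = (s², s, s). -/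
/-- The scalar curvature of the AMWP metric for the STU-model cubic, as an explicit
rational function of `(y₁, y₂, y₃)`. -/
noncomputable def stuScalar (y₁ y₂ y₃ : ℝ) : ℝ :=
  (2 / (3 * (y₃ * (y₂ + y₃) + y₁ * (y₂ + 2 * y₃)) ^ 3)) *
    (16 * y₁ ^ 6 - 9 * y₃ ^ 3 * (y₂ + y₃) ^ 3 + 24 * y₁ ^ 5 * (y₂ + 2 * y₃)
      - 27 * y₁ * y₃ ^ 2 * (y₂ + y₃) ^ 2 * (y₂ + 2 * y₃)
      + 12 * y₁ ^ 4 * (y₂ ^ 2 + 6 * y₂ * y₃ + 6 * y₃ ^ 2)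
      - 3 * y₁ ^ 3 * (3 * y₂ ^ 3 + 10 * y₂ ^ 2 * y₃ + 12 * y₂ * y₃ ^ 2 + 8 * y₃ ^ 3)
      - 3 * y₁ ^ 2 * y₃ * (9 * y₂ ^ 3 + 41 * y₂ ^ 2 * y₃ + 64 * y₂ * y₃ ^ 2 + 32 * y₃ ^ 3))

/-- the scalar curvature tends to `+∞` along the curve
`(y₁, y₂, y₃) = (s², s, s)` as `s → ∞`. -/
theorem stmt_10 :
    Filter.Tendsto (fun s : ℝ => stuScalar (s ^ 2) s s) Filter.atTop Filter.atTop := by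
  refine Filter.tendsto_atTop_mono' _ ?_ Filter.tendsto_id
  filter_upwards [Filter.eventually_ge_atTop 6] with s hs
  have hs0 : (0:ℝ) < s := by linarith
  unfold stuScalar
  have hD : (0:ℝ) < 3 * (s * (s + s) + s ^ 2 * (s + 2 * s)) ^ 3 := by positivity
  rw [div_mul_eq_mul_div, le_div_iff₀ hD]
  have h6 : 0 ≤ s - 6 := by linarith
  have key : 0 ≤ 32*s^6 + 144*s^5 + 231*s^4 - 360*s^3 - 984*s^2 - 672*s - 144 := by
    nlinarith [mul_nonneg (mul_nonneg h6 (pow_pos hs0 3).le) (pow_pos hs0 2).le,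
      mul_nonneg h6 (pow_pos hs0 3).le, mul_nonneg h6 (pow_pos hs0 2).le,
      mul_nonneg h6 hs0.le, h6, pow_pos hs0 4, pow_pos hs0 5, pow_pos hs0 6]
  simp only [id_eq]
  have eq1 : 2 * (16 * (s ^ 2) ^ 6 - 9 * s ^ 3 * (s + s) ^ 3 + 24 * (s ^ 2) ^ 5 * (s + 2 * s) -
              27 * s ^ 2 * s ^ 2 * (s + s) ^ 2 * (s + 2 * s) +
            12 * (s ^ 2) ^ 4 * (s ^ 2 + 6 * s * s + 6 * s ^ 2) -
          3 * (s ^ 2) ^ 3 * (3 * s ^ 3 + 10 * s ^ 2 * s + 12 * s * s ^ 2 + 8 * s ^ 3) -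
        3 * (s ^ 2) ^ 2 * s * (9 * s ^ 3 + 41 * s ^ 2 * s + 64 * s * s ^ 2 + 32 * s ^ 3))
      - s * (3 * (s * (s + s) + s ^ 2 * (s + 2 * s)) ^ 3)
      = s ^ 6 * (32*s^6 + 144*s^5 + 231*s^4 - 360*s^3 - 984*s^2 - 672*s - 144) := by
    ring
  linarith [mul_nonneg (pow_pos hs0 6).le key, eq1]
end

section
/- Let f(y_1, y_2, y_3) = y_1³ + y_2(a y_2² + 3b y_2 y_3 + 3c y_3²) with real coefficients a, b, c. Define G_{ij} = (∂f/∂y_i)(∂f/∂y_j) - f ∂²f/∂y_i∂y_j, B = adj(G) (the adjugate/cofactor matrix), and C_{pq} = f_{11p} f_{11q} where f_{ijk} are the third partial derivatives of f. Then tr(B·C) is a nonzero constant multiple of ((b² - ac) y_2² + b c y_2 y_3 + c² y_3²)(f - 3y_1³) f, identically as polynomials in y_1, y_2, y_3. -/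
open MvPolynomial

lemma pderiv_natCast' {σ R : Type*} [CommSemiring R] (i : σ) (n : ℕ) :
    pderiv i ((n : ℕ) : MvPolynomial σ R) = 0 := by
  rw [← map_natCast (C : R →+* MvPolynomial σ R)]; exact pderiv_C

set_option maxHeartbeats 4000000

/-- for `f = y₁³ + y₂(a y₂² + 3b y₂y₃ + 3c y₃²)`, with
`G_{ij} = ∂_i f ∂_j f - f ∂_i∂_j f`, `B = adj(G)` and `C_{pq} = f_{11p} f_{11q}` (third
partials), `tr(B·C)` is a nonzero constant multiple of
`((b² - ac) y₂² + bc y₂y₃ + c² y₃²)(f - 3y₁³) f`. -/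
theorem stmt_12 (a b c : ℝ) :
    let f : MvPolynomial (Fin 3) ℝ :=
      X 0 ^ 3 + X 1 * (C a * X 1 ^ 2 + C 3 * C b * X 1 * X 2 + C 3 * C c * X 2 ^ 2)
    let G : Matrix (Fin 3) (Fin 3) (MvPolynomial (Fin 3) ℝ) :=
      Matrix.of fun i j => pderiv i f * pderiv j f - f * pderiv i (pderiv j f)
    let B := G.adjugate
    let Cm : Matrix (Fin 3) (Fin 3) (MvPolynomial (Fin 3) ℝ) :=
      Matrix.of fun p q =>
        pderiv 0 (pderiv 0 (pderiv p f)) * pderiv 0 (pderiv 0 (pderiv q f))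
    ∃ k : ℝ, k ≠ 0 ∧
      Matrix.trace (B * Cm)
        = C k * ((C (b ^ 2 - a * c) * X 1 ^ 2 + C (b * c) * X 1 * X 2 + C (c ^ 2) * X 2 ^ 2)
            * (f - C 3 * X 0 ^ 3) * f) := by
  intro f G B Cm
  refine ⟨648, by norm_num, ?_⟩
  show Matrix.trace (G.adjugate * Cm) = _
  rw [Matrix.adjugate_fin_three]
  simp only [Matrix.trace_fin_three, Matrix.mul_apply, Fin.sum_univ_three,
    Matrix.cons_val', Matrix.cons_val_zero, Matrix.cons_val_one, Matrix.head_cons,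
    Matrix.empty_val', Matrix.cons_val_fin_one, Matrix.head_fin_const,
    Matrix.cons_val_two, Matrix.tail_cons, Matrix.of_apply, G, Cm, f]
  simp only [map_add, map_zero, pderiv_mul, pderiv_pow, pderiv_X_self, pderiv_C, pderiv_natCast',
    pderiv_one,
    pderiv_X_of_ne (by decide : (0:Fin 3) ≠ 1), pderiv_X_of_ne (by decide : (0:Fin 3) ≠ 2),
    pderiv_X_of_ne (by decide : (1:Fin 3) ≠ 0), pderiv_X_of_ne (by decide : (1:Fin 3) ≠ 2),
    pderiv_X_of_ne (by decide : (2:Fin 3) ≠ 0), pderiv_X_of_ne (by decide : (2:Fin 3) ≠ 1),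
    mul_zero, zero_mul, add_zero, zero_add, sub_zero, mul_one, one_mul]
  simp only [map_sub, map_mul, map_pow, map_ofNat]
  ring
end

section
/- For the cubic f = 50y_1³ + 30y_1²y_2 + 6y_1y_2² + 240y_1²y_3 + 96y_1y_2y_3 + 9y_2²y_3 + 384y_1y_3² + 75y_2y_3² + 203y_3³ (the topological cubic form of a resolution of V_16 ⊂ P(1,1,1,5,8)), the Hessian determinant det(∂²f/∂y_i∂y_j) vanishes identically on the hyperplane y_2 = 0, while f restricted to y_2 = 0 equals 50y_1³ + 240y_1²y_3 + 384y_1y_3² + 203y_3³, which is strictly positive for (y_1, y_3) in the closed positive quadrant minus the origin. -/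
open MvPolynomial

set_option maxHeartbeats 1000000 in
/-- for the topological cubic form
`f = 50y₁³ + 30y₁²y₂ + 6y₁y₂² + 240y₁²y₃ + 96y₁y₂y₃ + 9y₂²y₃ + 384y₁y₃² + 75y₂y₃² + 203y₃³`
of a resolution of `V₁₆ ⊂ P(1,1,1,5,8)`: the Hessian determinant vanishes identically on the
hyperplane `y₂ = 0`; `f` restricted to `y₂ = 0` equals `50y₁³ + 240y₁²y₃ + 384y₁y₃² + 203y₃³`,
which is strictly positive on the punctured closed positive quadrant. -/
theorem stmt_14 :
    let f : MvPolynomial (Fin 3) ℝ :=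
      C 50 * X 0 ^ 3 + C 30 * X 0 ^ 2 * X 1 + C 6 * X 0 * X 1 ^ 2 + C 240 * X 0 ^ 2 * X 2
        + C 96 * X 0 * X 1 * X 2 + C 9 * X 1 ^ 2 * X 2 + C 384 * X 0 * X 2 ^ 2
        + C 75 * X 1 * X 2 ^ 2 + C 203 * X 2 ^ 3
    let Hdet := (Matrix.of fun i j : Fin 3 => pderiv i (pderiv j f)).det
    let restrict : MvPolynomial (Fin 3) ℝ → MvPolynomial (Fin 3) ℝ :=
      fun p => aeval (fun i : Fin 3 => if i = 1 then 0 else X i) p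
    restrict Hdet = 0 ∧
      restrict f = C 50 * X 0 ^ 3 + C 240 * X 0 ^ 2 * X 2 + C 384 * X 0 * X 2 ^ 2
          + C 203 * X 2 ^ 3 ∧
      (∀ y₁ y₃ : ℝ, 0 ≤ y₁ → 0 ≤ y₃ → ¬(y₁ = 0 ∧ y₃ = 0) →
        0 < 50 * y₁ ^ 3 + 240 * y₁ ^ 2 * y₃ + 384 * y₁ * y₃ ^ 2 + 203 * y₃ ^ 3) := by
  intro f Hdet restrict
  refine ⟨?_, ?_, ?_⟩
  · have hre : restrict Hdet =
        ((Matrix.of fun i j : Fin 3 => pderiv i (pderiv j f)).map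
          (aeval (fun i : Fin 3 => if i = 1 then (0 : MvPolynomial (Fin 3) ℝ) else X i))).det := by
      have h := AlgHom.map_det (R := ℝ)
        (aeval fun i : Fin 3 => if i = 1 then (0 : MvPolynomial (Fin 3) ℝ) else X i)
        (Matrix.of fun i j : Fin 3 => pderiv i (pderiv j f))
      rwa [AlgHom.mapMatrix_apply] at h
    have hM : ((Matrix.of fun i j : Fin 3 => pderiv i (pderiv j f)).map
          (aeval (fun i : Fin 3 => if i = 1 then (0 : MvPolynomial (Fin 3) ℝ) else X i))) =
        Matrix.of ![![C 300 * X 0 + C 480 * X 2, C 60 * X 0 + C 96 * X 2, C 480 * X 0 + C 768 * X 2],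
          ![C 60 * X 0 + C 96 * X 2, C 12 * X 0 + C 18 * X 2, C 96 * X 0 + C 150 * X 2],
          ![C 480 * X 0 + C 768 * X 2, C 96 * X 0 + C 150 * X 2, C 768 * X 0 + C 1218 * X 2]] := by
      ext i j
      fin_cases i <;> fin_cases j <;>
      · simp only [Fin.zero_eta, Fin.mk_one, Fin.reduceFinMk, Fin.isValue]
        simp only [Matrix.map_apply, Matrix.of_apply, f, map_add, pderiv_C_mul, pderiv_mul,
          pderiv_pow, pderiv_X_self,
          pderiv_X_of_ne (show (1:Fin 3) ≠ 0 by decide),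
          pderiv_X_of_ne (show (2:Fin 3) ≠ 0 by decide),
          pderiv_X_of_ne (show (0:Fin 3) ≠ 1 by decide),
          pderiv_X_of_ne (show (2:Fin 3) ≠ 1 by decide),
          pderiv_X_of_ne (show (0:Fin 3) ≠ 2 by decide),
          pderiv_X_of_ne (show (1:Fin 3) ≠ 2 by decide),
          pderiv_C, pderiv_one, Derivation.map_natCast, mul_zero, zero_mul, add_zero, zero_add, mul_one,
          one_mul, map_zero]
        simp only [map_add, map_mul, map_pow, map_natCast, map_ofNat, aeval_C, aeval_X]
        simp [Matrix.vecHead, Matrix.vecTail, show ¬((0:Fin 3) = 1) by decide,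
          show ¬((2:Fin 3) = 1) by decide]
        push_cast
        ring
    rw [hre, hM]
    simp only [Matrix.det_fin_three, Matrix.cons_val', Matrix.cons_val_zero, Matrix.cons_val_one,
      Matrix.head_cons, Matrix.empty_val', Matrix.cons_val_fin_one, Matrix.cons_val_two,
      Matrix.tail_cons, Matrix.head_fin_const, Matrix.of_apply, map_ofNat]
    ring
  · show aeval _ f = _
    simp only [f, map_add, map_mul, map_pow, aeval_C, aeval_X, algebraMap_eq]
    simp only [show ¬((0:Fin 3) = 1) by decide, show ¬((2:Fin 3) = 1) by decide,
      if_true, if_false, if_neg, if_pos]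
    ring
  · intro y₁ y₃ h1 h3 hne
    rcases lt_or_eq_of_le h1 with h | h
    · positivity
    · rcases lt_or_eq_of_le h3 with h3' | h3'
      · positivity
      · exact absurd ⟨h.symm, h3'.symm⟩ hne
end
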